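/- For any complex number w, any n ≥ 3, and any k ∈ {0,…,n−1}, the k-th Fourier polygon f_k := (r^{0·k}, r^{1·k}, …, r^{(n−1)·k})ᵗ with r := exp(2πi/n) is an eigenvector of the transformation matrix M, with eigenvalue |(1−w) + w·r^{−k}|²; in particular all eigenvalues of M are real and nonnegative. -/

import Mathlib

open Complex

/-- The matrix `M` of the composed polygon transformation: diagonal entries
`|1−w|² + |w|²`, entry `w(1−w̄)` at `(j,k)` with `j = k+1 (mod n)`, entry
`w̄(1−w)` at `(j,k)` with `k = j+1 (mod n)`, and `0` otherwise. -/
noncomputable def transMatrix (n : ℕ) (w : ℂ) : Matrix (ZMod n) (ZMod n) ℂ :=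
  Matrix.of fun j k =>
    if j = k then (((‖1 - w‖) ^ 2 + (‖w‖) ^ 2 : ℝ) : ℂ)
    else if j = k + 1 then w * (1 - (starRingEnd ℂ) w)
    else if k = j + 1 then (starRingEnd ℂ) w * (1 - w)
    else 0

/-- The `k`-th Fourier polygon `f_k = (r^{0·k}, …, r^{(n−1)·k})ᵗ` with
`r = exp(2πi/n)`. -/
noncomputable def fourierPolygon (n k : ℕ) : ZMod n → ℂ :=
  fun j => Complex.exp (2 * Real.pi * Complex.I / n) ^ (j.val * k)

/-- The `k`-th Fourier polygon is an eigenvector of `M` with the real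
nonnegative eigenvalue `|(1−w) + w·r^{−k}|²`. -/
theorem fourierPolygon_eigenvector (n : ℕ) [NeZero n] (hn : 3 ≤ n) (w : ℂ)
    (k : ℕ) (hk : k < n) :
    (transMatrix n w).mulVec (fourierPolygon n k) =
      (((‖(1 - w) + w * Complex.exp (2 * Real.pi * Complex.I / n) ^ (-(k : ℤ))‖) ^ 2
        : ℝ) : ℂ) • fourierPolygon n k ∧
    (0 : ℝ) ≤
      (‖(1 - w) + w * Complex.exp (2 * Real.pi * Complex.I / n) ^ (-(k : ℤ))‖) ^ 2 := by
  haveI : Fact (1 < n) := ⟨by omega⟩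
  set r : ℂ := Complex.exp (2 * Real.pi * Complex.I / n) with hrdef
  have hn0 : (n : ℂ) ≠ 0 := Nat.cast_ne_zero.mpr (NeZero.ne n)
  have hr0 : r ≠ 0 := Complex.exp_ne_zero _
  have hrn : r ^ n = 1 := by
    rw [hrdef, ← Complex.exp_nat_mul]
    have : (n:ℂ) * (2 * Real.pi * Complex.I / n) = 2 * Real.pi * Complex.I := by field_simp
    rw [this, Complex.exp_two_pi_mul_I]
  have hconj : (starRingEnd ℂ) r = r⁻¹ := by
    rw [hrdef, ← Complex.exp_conj, ← Complex.exp_neg]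
    congr 1
    simp [map_div₀, Complex.conj_I, map_ofNat]
    ring
  have hmod : ∀ m : ℕ, r ^ m = r ^ (m % n) := by
    intro m
    conv_lhs => rw [← Nat.div_add_mod m n]
    rw [pow_add, pow_mul, hrn, one_pow, one_mul]
  have hcongr : ∀ a b : ℕ, a % n = b % n → r ^ a = r ^ b := fun a b h => by
    rw [hmod a, hmod b, h]
  have hone : (1 : ZMod n) ≠ 0 := by
    intro h
    have h2 : ((1:ℕ) : ZMod n) = 0 := by exact_mod_cast h
    rw [ZMod.natCast_eq_zero_iff] at h2
    have := Nat.le_of_dvd (by norm_num) h2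
    omega
  have htwo : (2 : ZMod n) ≠ 0 := by
    intro h
    have h2 : ((2:ℕ) : ZMod n) = 0 := by exact_mod_cast h
    rw [ZMod.natCast_eq_zero_iff] at h2
    have := Nat.le_of_dvd (by norm_num) h2
    omega
  have hshift : ∀ j : ZMod n, fourierPolygon n k (j + 1) = r ^ k * fourierPolygon n k j := by
    intro j
    show r ^ ((j+1).val * k) = r ^ k * r ^ (j.val * k)
    rw [← pow_add]
    apply hcongr
    have hv : (j + 1).val = (j.val + 1) % n := by
      rw [ZMod.val_add, ZMod.val_one]
    rw [hv]
    have : (j.val + 1) % n * k % n = ((j.val + 1) * k) % n :=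
      (Nat.mod_modEq (j.val + 1) n).mul_right k
    rw [this]
    congr 1
    ring
  have habs : ∀ z : ℂ, ((‖z‖ ^ 2 : ℝ) : ℂ) = z * (starRingEnd ℂ) z := by
    intro z
    rw [Complex.sq_norm]
    exact (Complex.mul_conj z).symm
  refine ⟨?_, sq_nonneg _⟩
  funext j
  have hne1 : (j - 1 : ZMod n) ≠ j := by
    intro h; apply hone; linear_combination -h
  have hne2 : (j - 1 : ZMod n) ≠ j + 1 := by
    intro h; apply htwo; linear_combination -h
  have hne3 : (j : ZMod n) ≠ j + 1 := by
    intro h; apply hone; linear_combination -h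
  have hM1 : transMatrix n w j (j - 1) = w * (1 - (starRingEnd ℂ) w) := by
    simp only [transMatrix, Matrix.of_apply]
    rw [if_neg hne1.symm, if_pos (by ring)]
  have hM2 : transMatrix n w j j =
      (((‖1 - w‖) ^ 2 + (‖w‖) ^ 2 : ℝ) : ℂ) := by
    simp [transMatrix]
  have hM3 : transMatrix n w j (j + 1) = (starRingEnd ℂ) w * (1 - w) := by
    have h2 : ¬ (j : ZMod n) = (j + 1) + 1 := by
      intro h; apply htwo; linear_combination -h
    simp only [transMatrix, Matrix.of_apply]
    rw [if_neg hne3, if_neg h2]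
    simp
  have hzero : ∀ i : ZMod n, i ∉ ({j - 1, j, j + 1} : Finset (ZMod n)) →
      transMatrix n w j i * fourierPolygon n k i = 0 := by
    intro i hi
    simp only [Finset.mem_insert, Finset.mem_singleton, not_or] at hi
    obtain ⟨hi1, hi2, hi3⟩ := hi
    simp only [transMatrix, Matrix.of_apply]
    have h2 : ¬ (j : ZMod n) = i + 1 := by
      intro h; apply hi1; linear_combination -h
    rw [if_neg (fun h => hi2 h.symm), if_neg h2, if_neg (fun h => hi3 h), zero_mul]
  have hsum : (transMatrix n w).mulVec (fourierPolygon n k) j =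
      ∑ i ∈ ({j - 1, j, j + 1} : Finset (ZMod n)),
        transMatrix n w j i * fourierPolygon n k i := by
    rw [Matrix.mulVec, dotProduct]
    exact (Finset.sum_subset (Finset.subset_univ _) (fun i _ hi => hzero i hi)).symm
  rw [hsum]
  rw [Finset.sum_insert (by simp [hne1, hne2]),
      Finset.sum_insert (by simp [hne3]), Finset.sum_singleton]
  rw [hM1, hM2, hM3]
  -- rewrite the f values
  have hfp1 : fourierPolygon n k (j + 1) = r ^ k * fourierPolygon n k j := hshift j
  have hfm1 : fourierPolygon n k j = r ^ k * fourierPolygon n k (j - 1) := by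
    have := hshift (j - 1)
    rwa [sub_add_cancel] at this
  have hfm1' : fourierPolygon n k (j - 1) = (r ^ k)⁻¹ * fourierPolygon n k j := by
    rw [hfm1]
    field_simp
  rw [hfp1, hfm1']
  -- rewrite the scalar
  rw [Pi.smul_apply, smul_eq_mul, habs]
  have hz : r ^ (-(k : ℤ)) = (r ^ k)⁻¹ := by
    rw [zpow_neg, zpow_natCast]
  have hconjz : (starRingEnd ℂ) (r ^ (-(k : ℤ))) = r ^ k := by
    rw [map_zpow₀, hconj, inv_zpow, ← zpow_neg, neg_neg, zpow_natCast]
  rw [map_add, map_mul, hconjz, hz]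
  rw [Complex.ofReal_add, habs (1 - w), habs w]
  simp only [map_sub, map_one]
  have hA : (r : ℂ) ^ k ≠ 0 := pow_ne_zero _ hr0
  field_simp
  ring
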